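/- Let C ⊆ ℍ be an open cone with −C = C and C ∩ {(x,y,z) : z = 0} ≠ ∅. Then there exist α > 0 and a rotation R of ℝ³ around the z-axis such that C(α) ⊆ R(C). -/

import Mathlib

open Set

noncomputable section

/-- The first Heisenberg group as ℝ³. -/
abbrev H : Type := ℝ × ℝ × ℝ

/-- Heisenberg group multiplication. -/
def Hmul (p q : H) : H :=
  (p.1 + q.1, p.2.1 + q.2.1, p.2.2 + q.2.2 + (p.1 * q.2.1 - q.1 * p.2.1) / 2)

/-- Heisenberg group inverse. -/
def Hinv (p : H) : H := (-p.1, -p.2.1, -p.2.2)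

/-- Left translation of a set: `pE = {pe : e ∈ E}`. -/
def LTrans (p : H) (E : Set H) : Set H := Hmul p '' E

/-- The α-flat cone `fC(α) = {(x,y,0) : |y| < α|x|}`. -/
def fC (α : ℝ) : Set H := {p | |p.2.1| < α * |p.1| ∧ p.2.2 = 0}

/-- The α-full cone `C(α) = {(x,y,z) : |y| < α|x|, |z| < αx²/2}`. -/
def fullC (α : ℝ) : Set H := {p | |p.2.1| < α * |p.1| ∧ |p.2.2| < α * p.1 ^ 2 / 2}

/-- The truncated full cone `C(β,r)`. -/
def truncC (β r : ℝ) : Set H :=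
  {p | |p.2.1| < β * |p.1| ∧ |p.2.2| < β * p.1 ^ 2 / 2 ∧ |p.1| < r}

/-- The vertical set `vC(β,r) = {(x,0,ux²/2) : |u| < β, |x| < r}`. -/
def vC (β r : ℝ) : Set H :=
  {p | ∃ u x : ℝ, |u| < β ∧ |x| < r ∧ p = (x, 0, u * x ^ 2 / 2)}

/-- The shear map `M_t(x,y,z) = (x, y + tx, z)`. -/
def Mmap (t : ℝ) (p : H) : H := (p.1, p.2.1 + t * p.1, p.2.2)

/-- The projection `π(x,y,z) = (y, z + xy/2)`. -/
def proj (p : H) : ℝ × ℝ := (p.2.1, p.2.2 + p.1 * p.2.1 / 2)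

/-- The intrinsic graph of `φ` over `Ω`. -/
def IGraph (Ω : Set (ℝ × ℝ)) (φ : ℝ × ℝ → ℝ) : Set H :=
  (fun w => (φ w, w.1, w.2 - w.1 * φ w / 2)) '' Ω

/-- The α-flat cone property. -/
def FlatConeProp (α : ℝ) (S : Set H) : Prop :=
  ∀ p ∈ S, fC α ∩ LTrans (Hinv p) S = ∅

/-- A topological surface: every point of `S` has an open neighborhood in `S`
homeomorphic to `ℝ²`. -/
def IsTopSurface (S : Set H) : Prop :=
  ∀ p : S, ∃ U : Set S, IsOpen U ∧ p ∈ U ∧ Nonempty (U ≃ₜ (ℝ × ℝ))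

/-- Dilations `δ_λ(x,y,z) = (λx, λy, λ²z)`. -/
def dil (l : ℝ) (p : H) : H := (l * p.1, l * p.2.1, l ^ 2 * p.2.2)

/-- A cone is a set invariant under all dilations. -/
def IsCone (E : Set H) : Prop := ∀ l : ℝ, 0 < l → dil l '' E = E

/-- Rotation around the z-axis by angle θ. -/
def Rot (θ : ℝ) (p : H) : H :=
  (p.1 * Real.cos θ - p.2.1 * Real.sin θ, p.1 * Real.sin θ + p.2.1 * Real.cos θ, p.2.2)


lemma dil_dil (a b : ℝ) (p : H) : dil a (dil b p) = dil (a * b) p := by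
  simp only [dil, Prod.mk.injEq]
  exact ⟨by ring, by ring, by ring⟩

lemma dil_one (p : H) : dil 1 p = p := by simp [dil]

lemma cone_mem {C : Set H} (hcone : IsCone C) {l : ℝ} (hl : 0 < l) {p : H} :
    p ∈ C ↔ dil l p ∈ C := by
  constructor
  · intro hp
    rw [← hcone l hl]
    exact ⟨p, hp, rfl⟩
  · intro hp
    have h1 : dil l⁻¹ (dil l p) ∈ dil l⁻¹ '' C := Set.mem_image_of_mem _ hp
    rw [hcone l⁻¹ (by positivity)] at h1
    rwa [dil_dil, inv_mul_cancel₀ hl.ne', dil_one] at h1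

lemma Rot_Rot (a b : ℝ) (p : H) : Rot a (Rot b p) = Rot (a + b) p := by
  simp only [Rot, Real.cos_add, Real.sin_add, Prod.mk.injEq]
  exact ⟨by ring, by ring, trivial⟩

lemma Rot_zero (p : H) : Rot 0 p = p := by simp [Rot]

lemma Rot_dil (θ l : ℝ) (p : H) : Rot θ (dil l p) = dil l (Rot θ p) := by
  simp only [Rot, dil, Prod.mk.injEq]
  exact ⟨by ring, by ring, trivial⟩

lemma Rot_neg_pt (θ : ℝ) (p : H) : Rot θ (-p) = -(Rot θ p) := by
  obtain ⟨x, y, w⟩ := p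
  simp only [Rot, Prod.neg_mk, Prod.mk.injEq]
  exact ⟨by ring, by ring, trivial⟩

lemma Rot_cont (θ : ℝ) : Continuous (Rot θ) := by
  unfold Rot; fun_prop

theorem stmt10 (C : Set H) (hopen : IsOpen C) (hcone : IsCone C)
    (hsym : ∀ p : H, p ∈ C ↔ -p ∈ C)
    (hz : (C ∩ {p : H | p.2.2 = 0}).Nonempty) :
    ∃ α > 0, ∃ θ : ℝ, fullC α ⊆ Rot θ '' C := by
  obtain ⟨p, hpC, hpz⟩ := hz
  simp only [Set.mem_setOf_eq] at hpz
  by_cases h0 : p.1 = 0 ∧ p.2.1 = 0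
  · -- degenerate case: p = 0, hence C = univ
    have hp0 : p = ((0 : ℝ), (0 : ℝ), (0 : ℝ)) := by
      obtain ⟨x, y, w⟩ := p
      obtain ⟨h1, h2⟩ := h0
      simp only at h1 h2 hpz
      rw [h1, h2, hpz]
    rw [hp0] at hpC
    have hC : ∀ q : H, q ∈ C := by
      intro q
      have hcont : ContinuousAt (fun l : ℝ => dil l q) 0 := by
        unfold dil; fun_prop
      have h00 : dil 0 q = ((0 : ℝ), (0 : ℝ), (0 : ℝ)) := by simp [dil]
      have hmem : C ∈ nhds (dil (0 : ℝ) q) := by rw [h00]; exact hopen.mem_nhds hpC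
      have hev : ∀ᶠ l in nhds (0 : ℝ), dil l q ∈ C := hcont.eventually_mem hmem
      have hev2 : ∀ᶠ l in nhdsWithin (0 : ℝ) (Set.Ioi 0), dil l q ∈ C :=
        hev.filter_mono nhdsWithin_le_nhds
      obtain ⟨l, hl1, hl2⟩ := (hev2.and eventually_mem_nhdsWithin).exists
      exact (cone_mem hcone hl2).mpr hl1
    exact ⟨1, one_pos, 0, fun q _ => ⟨q, hC q, Rot_zero q⟩⟩
  · set w : ℂ := ⟨p.1, p.2.1⟩ with hw
    have hw0 : w ≠ 0 := by
      intro h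
      apply h0
      constructor
      · exact congrArg Complex.re h
      · exact congrArg Complex.im h
    set r : ℝ := ‖w‖ with hrdef
    have hr : 0 < r := norm_pos_iff.mpr hw0
    set θ : ℝ := Complex.arg w with hθ
    have hcos : Real.cos θ = p.1 / r := by
      rw [hθ, Complex.cos_arg hw0]
    have hsin : Real.sin θ = p.2.1 / r := by
      rw [hθ, Complex.sin_arg]
    have hRp : Rot θ ((r : ℝ), (0 : ℝ), (0 : ℝ)) = p := by
      have : p = (p.1, p.2.1, p.2.2) := rfl
      rw [this]
      simp only [Rot, hcos, hsin, Prod.mk.injEq]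
      refine ⟨by field_simp <;> ring, by field_simp <;> ring, hpz.symm⟩
    have hRcont : Continuous (Rot θ) := Rot_cont θ
    have hDopen : IsOpen {q : H | Rot θ q ∈ C} := hopen.preimage hRcont
    have hD1 : Rot θ ((1 : ℝ), (0 : ℝ), (0 : ℝ)) ∈ C := by
      rw [cone_mem hcone hr, ← Rot_dil]
      have hd : dil r ((1 : ℝ), (0 : ℝ), (0 : ℝ)) = ((r : ℝ), (0 : ℝ), (0 : ℝ)) := by
        simp [dil]
      rw [hd, hRp]
      exact hpC
    obtain ⟨ε, hε, hball⟩ := Metric.isOpen_iff.mp hDopen _ hD1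
    have key : ∀ q : H, 0 < q.1 → |q.2.1| < ε * |q.1| → |q.2.2| < ε * q.1 ^ 2 / 2 →
        Rot θ q ∈ C := by
      intro q hx hy hz2
      set q' : H := ((1 : ℝ), q.2.1 / q.1, q.2.2 / q.1 ^ 2) with hq'
      have hxne : q.1 ≠ 0 := hx.ne'
      have hq'mem : q' ∈ Metric.ball ((1 : ℝ), (0 : ℝ), (0 : ℝ)) ε := by
        rw [Metric.mem_ball, Prod.dist_eq, Prod.dist_eq]
        have h1 : dist (1 : ℝ) (1 : ℝ) = 0 := by simp
        have h2 : dist (q.2.1 / q.1) (0 : ℝ) < ε := by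
          rw [Real.dist_eq, sub_zero, abs_div]
          rw [div_lt_iff₀ (by rwa [abs_pos])]
          exact hy
        have h3 : dist (q.2.2 / q.1 ^ 2) (0 : ℝ) < ε := by
          rw [Real.dist_eq, sub_zero, abs_div]
          rw [div_lt_iff₀ (by positivity)]
          have : |q.1 ^ 2| = q.1 ^ 2 := abs_of_nonneg (by positivity)
          rw [this]
          calc |q.2.2| < ε * q.1 ^ 2 / 2 := hz2
            _ ≤ ε * q.1 ^ 2 := by nlinarith [sq_nonneg q.1]
        simp only [hq']
        rw [h1]
        exact max_lt (by simpa using hε) (max_lt h2 h3)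
      have hq'D : Rot θ q' ∈ C := hball hq'mem
      have hdq : dil q.1 q' = q := by
        simp only [dil, hq']
        have : q = (q.1, q.2.1, q.2.2) := rfl
        rw [this]
        simp only [Prod.mk.injEq]
        refine ⟨by ring, by field_simp, by field_simp⟩
      rw [cone_mem hcone hx, ← Rot_dil, hdq] at hq'D
      exact hq'D
    refine ⟨ε, hε, -θ, ?_⟩
    intro q hq
    obtain ⟨hq1, hq2⟩ := hq
    have hx0 : q.1 ≠ 0 := by
      intro h
      rw [h, abs_zero, mul_zero] at hq1
      exact absurd hq1 (abs_nonneg _).not_gt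
    have hRq : Rot θ q ∈ C := by
      rcases lt_or_gt_of_ne hx0 with hneg | hpos
      · have hnq : Rot θ (-q) ∈ C := by
          apply key
          · simpa using hneg
          · simpa using hq1
          · simpa using hq2
        rw [Rot_neg_pt] at hnq
        exact (hsym _).mpr hnq
      · exact key q hpos hq1 hq2
    exact ⟨Rot θ q, hRq, by rw [Rot_Rot, neg_add_cancel, Rot_zero]⟩
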